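/- Let u: ℝ → ℝ be a strictly convex smooth function and a > 0 a real number such that u(t + a) = e^{−a} u(t) for all t ∈ ℝ. Then u(t) > 0 for all t ∈ ℝ. -/
import Mathlib


/-- A strictly convex smooth (C²) function `u : ℝ → ℝ` with `u'' > 0` everywhere which
satisfies the equivariance relation `u(t + a) = e^{-a} u(t)` for some `a > 0` is
everywhere strictly positive. -/
theorem strictly_convex_equivariant_positive
    (u : ℝ → ℝ) (a : ℝ) (ha : 0 < a)
    (hu : ContDiff ℝ 2 u)
    (hconv : ∀ t : ℝ, 0 < deriv (deriv u) t)
    (heq : ∀ t : ℝ, u (t + a) = Real.exp (-a) * u t) :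
    ∀ t : ℝ, 0 < u t := by
  intro t
  have hsc : StrictConvexOn ℝ Set.univ u :=
    strictConvexOn_of_deriv2_pos convex_univ hu.continuous.continuousOn
      (fun x _ => by simpa [Function.iterate_succ, Function.comp] using hconv x)
  have hne : t ≠ t + 2 * a := by nlinarith
  have key := hsc.2 (Set.mem_univ t) (Set.mem_univ (t + 2 * a)) hne
    (by norm_num : (0:ℝ) < 1/2) (by norm_num : (0:ℝ) < 1/2) (by norm_num)
  have harg : (1/2 : ℝ) • t + (1/2 : ℝ) • (t + 2 * a) = t + a := by
    simp only [smul_eq_mul]; ring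
  rw [harg] at key
  have h1 : u (t + a) = Real.exp (-a) * u t := heq t
  have h2 : u (t + 2 * a) = Real.exp (-a) * (Real.exp (-a) * u t) := by
    have := heq (t + a)
    rw [h1] at this
    rw [show t + 2 * a = t + a + a by ring, this]
  rw [h1, h2] at key
  simp only [smul_eq_mul] at key
  have he : Real.exp (-a) < 1 := by
    rw [Real.exp_lt_one_iff]; linarith
  nlinarith [sq_nonneg (1 - Real.exp (-a)), Real.exp_pos (-a)]
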